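/- Let F : (0,∞) → ℝ be a C¹ function such that F(z)/z → a as z → ∞ for some a > 0, and sup_{z>0} F′(z) < ∞. Then there exists a nonnegative integer k₀ such that for every integer k ≥ k₀ the equation tan z = F(z) has exactly one solution z in the interval ((k − 1/2)π, (k + 1/2)π). -/

import Mathlib

open Set Filter Real

/-- Lemma `unique1`. If `F ∈ C¹(0,∞)`, `F(z) ∼ az` as `z → ∞` with
`a > 0`, and `sup F′ < ∞`, then for all sufficiently large `k` the equation
`tan z = F(z)` has exactly one solution in `((k - 1/2)π, (k + 1/2)π)`. -/
theorem unique_solution_tan_eq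
    (F : ℝ → ℝ) (hF : ContDiffOn ℝ 1 F (Set.Ioi 0))
    (a : ℝ) (ha : 0 < a)
    (hlim : Filter.Tendsto (fun z => F z / z) Filter.atTop (nhds a))
    (hsup : ∃ M : ℝ, ∀ z > 0, deriv F z ≤ M) :
    ∃ k₀ : ℕ, ∀ k ≥ k₀, ∃! z : ℝ,
      z ∈ Set.Ioo (((k : ℝ) - 1 / 2) * Real.pi) (((k : ℝ) + 1 / 2) * Real.pi) ∧
      Real.tan z = F z := by
  obtain ⟨M, hM⟩ := hsup
  have hpi : (1:ℝ) < π := by nlinarith [Real.pi_gt_three]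
  -- eventually F z / z ≥ a/2
  have h2 : ∀ᶠ z in atTop, a / 2 ≤ F z / z :=
    hlim.eventually (eventually_ge_nhds (by linarith))
  obtain ⟨R, hR⟩ := h2.exists_forall_of_atTop
  set B : ℝ := max R (max 1 (Real.sqrt (max M 0) * 2 / a + 1)) with hB
  obtain ⟨k₀, hk₀⟩ := exists_nat_ge (B + 1)
  refine ⟨k₀, fun k hk => ?_⟩
  have hkk : B + 1 ≤ (k : ℝ) := le_trans hk₀ (by exact_mod_cast hk)
  set L : ℝ := ((k : ℝ) - 1 / 2) * π with hL
  set Rt : ℝ := ((k : ℝ) + 1 / 2) * π with hRt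
  have hB1 : (1:ℝ) ≤ B := le_trans (le_max_left _ _) (le_max_right _ _)
  have hBL : B ≤ L := by
    have h1 : B ≤ (k:ℝ) - 1/2 := by linarith
    calc B = B * 1 := (mul_one B).symm
    _ ≤ ((k:ℝ) - 1/2) * π := by
        apply mul_le_mul h1 hpi.le zero_le_one (by linarith)
  have hL1 : (1:ℝ) ≤ L := le_trans hB1 hBL
  have hLR : B ≥ R → True := fun _ => trivial
  have hLgeR : R ≤ L := le_trans (le_max_left _ _) hBL
  have hLsqrt : Real.sqrt (max M 0) * 2 / a + 1 ≤ L :=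
    le_trans (le_trans (le_max_right _ _) (le_max_right _ _)) hBL
  have hLpi : L = (k:ℝ) * π - π / 2 := by rw [hL]; ring
  have hRpi : Rt = (k:ℝ) * π + π / 2 := by rw [hRt]; ring
  set C : ℝ := a / 2 * L with hC
  -- F z ≥ C for z ≥ L
  have hFC : ∀ z : ℝ, L ≤ z → C ≤ F z := by
    intro z hz
    have hz0 : (0:ℝ) < z := lt_of_lt_of_le (by linarith) hz
    have h3 : a / 2 ≤ F z / z := hR z (le_trans hLgeR hz)
    have h4 : a / 2 * z ≤ F z := (le_div_iff₀ hz0).mp h3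
    calc C ≤ a / 2 * z := by
          apply mul_le_mul_of_nonneg_left hz (by linarith)
    _ ≤ F z := h4
  have hCsqrt : Real.sqrt (max M 0) ≤ C := by
    have := mul_le_mul_of_nonneg_left hLsqrt (by linarith : (0:ℝ) ≤ a / 2)
    rw [← hC] at this
    have h5 : a / 2 * (Real.sqrt (max M 0) * 2 / a + 1) =
        Real.sqrt (max M 0) + a / 2 := by field_simp
    nlinarith
  have hC0 : (0:ℝ) ≤ C := le_trans (Real.sqrt_nonneg _) hCsqrt
  have hMC : M < 1 + C ^ 2 := by
    have h6 : max M 0 = Real.sqrt (max M 0) ^ 2 :=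
      (Real.sq_sqrt (le_max_right _ _)).symm
    have h7 : Real.sqrt (max M 0) ^ 2 ≤ C ^ 2 :=
      pow_le_pow_left₀ (Real.sqrt_nonneg _) hCsqrt 2
    have h8 : M ≤ max M 0 := le_max_left _ _
    linarith
  -- shifting facts
  have hmem : ∀ z ∈ Ioo L Rt, z - (k:ℝ) * π ∈ Ioo (-(π/2)) (π/2) := by
    intro z hz
    obtain ⟨h1, h2⟩ := hz
    rw [hLpi] at h1; rw [hRpi] at h2
    constructor <;> [linarith; linarith]
  have htan_shift : ∀ z : ℝ, Real.tan (z - (k:ℝ) * π) = Real.tan z := by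
    intro z
    have := (Real.tan_periodic.nat_mul k).sub_eq z
    simpa using this
  have hcos : ∀ z ∈ Ioo L Rt, Real.cos z ≠ 0 := by
    intro z hz hzero
    obtain ⟨n, hn⟩ := Real.cos_eq_zero_iff.mp hzero
    obtain ⟨h1, h2⟩ := hz
    rw [hL, hn] at h1; rw [hRt, hn] at h2
    have hpi0 := Real.pi_pos
    have hn1 : ((k:ℝ)) - 1 < (n:ℝ) := by nlinarith
    have hn2 : (n:ℝ) < (k:ℝ) := by nlinarith
    have h9 : ((k:ℤ)) - 1 < (n:ℤ) := by exact_mod_cast hn1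
    have h10 : (n:ℤ) < (k:ℤ) := by exact_mod_cast hn2
    omega
  have hmono : ∀ x y, x ∈ Ioo L Rt → y ∈ Ioo L Rt → x < y →
      Real.tan x < Real.tan y := by
    intro x y hx hy hxy
    rw [← htan_shift x, ← htan_shift y]
    exact Real.strictMonoOn_tan (hmem x hx) (hmem y hy) (by linarith)
  have hFdiff : ∀ z : ℝ, 0 < z → DifferentiableAt ℝ F z := fun z hz =>
    ((hF.differentiableOn one_ne_zero).differentiableAt (Ioi_mem_nhds hz))
  have hIooPos : ∀ z ∈ Ioo L Rt, (0:ℝ) < z := fun z hz =>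
    lt_of_lt_of_le (by linarith) (le_of_lt hz.1)
  -- Existence via arctan fixed point
  have hmaps : MapsTo (fun x : ℝ => x + (k:ℝ) * π) (Icc (-(π/2)) (π/2))
      (Ioi 0) := by
    intro x hx
    simp only [mem_Ioi]
    have hx1 := hx.1
    rw [hLpi] at hL1
    linarith
  have hcontF : ContinuousOn (fun x => F (x + (k:ℝ) * π))
      (Icc (-(π/2)) (π/2)) :=
    hF.continuousOn.comp ((continuous_id.add continuous_const).continuousOn)
      hmaps
  set g : ℝ → ℝ := fun x => x - Real.arctan (F (x + (k:ℝ) * π)) with hg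
  have hgcont : ContinuousOn g (Icc (-(π/2)) (π/2)) :=
    continuousOn_id.sub (Real.continuous_arctan.comp_continuousOn hcontF)
  have hga : g (-(π/2)) < 0 := by
    have := Real.neg_pi_div_two_lt_arctan (F (-(π/2) + (k:ℝ) * π))
    simp only [hg]; linarith
  have hgb : 0 < g (π/2) := by
    have := Real.arctan_lt_pi_div_two (F (π/2 + (k:ℝ) * π))
    simp only [hg]; linarith
  have hab : -(π/2) ≤ (π/2 : ℝ) := by linarith [Real.pi_pos]
  have hIVT := intermediate_value_Ioo hab hgcont
  have h0mem : (0:ℝ) ∈ Ioo (g (-(π/2))) (g (π/2)) := ⟨hga, hgb⟩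
  obtain ⟨x, hx, hgx⟩ := hIVT h0mem
  have hxfix : x = Real.arctan (F (x + (k:ℝ) * π)) := by
    have : x - Real.arctan (F (x + (k:ℝ) * π)) = 0 := hgx
    linarith
  have htanx : Real.tan x = F (x + (k:ℝ) * π) := by
    conv_lhs => rw [hxfix]
    exact Real.tan_arctan _
  set z : ℝ := x + (k:ℝ) * π with hz
  have hzmem : z ∈ Ioo L Rt := by
    constructor
    · rw [hLpi, hz]; have := hx.1; linarith
    · rw [hRpi, hz]; have := hx.2; linarith
  have hzsol : Real.tan z = F z := by
    rw [← htan_shift z]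
    have hzx : z - (k:ℝ) * π = x := by rw [hz]; ring
    rw [hzx, htanx]
  -- Uniqueness
  have key : ∀ z₁ z₂, z₁ ∈ Ioo L Rt → z₂ ∈ Ioo L Rt →
      Real.tan z₁ = F z₁ → Real.tan z₂ = F z₂ → z₁ < z₂ → False := by
    intro z₁ z₂ h₁ h₂ ht₁ ht₂ hlt
    set G : ℝ → ℝ := fun t => Real.tan t - F t with hG
    have hsub : Icc z₁ z₂ ⊆ Ioo L Rt := fun t ht =>
      ⟨lt_of_lt_of_le h₁.1 ht.1, lt_of_le_of_lt ht.2 h₂.2⟩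
    have hGcont : ContinuousOn G (Icc z₁ z₂) := by
      intro t ht
      have htI := hsub ht
      exact ((Real.continuousAt_tan.mpr (hcos t htI)).sub
        ((hF.continuousOn.continuousAt
          (Ioi_mem_nhds (hIooPos t htI)))) ).continuousWithinAt
    have hGeq : G z₁ = G z₂ := by simp [hG, ht₁, ht₂]
    obtain ⟨c, hc, hc0⟩ := exists_deriv_eq_zero hlt hGcont hGeq
    have hcI : c ∈ Ioo L Rt := hsub ⟨hc.1.le, hc.2.le⟩
    have hcosc : Real.cos c ≠ 0 := hcos c hcI
    have hdG : deriv G c = (1 + Real.tan c ^ 2) - deriv F c := by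
      rw [hG]
      rw [deriv_fun_sub (Real.differentiableAt_tan.mpr hcosc)
        (hFdiff c (hIooPos c hcI))]
      rw [Real.deriv_tan]
      have hinv : 1 / Real.cos c ^ 2 = 1 + Real.tan c ^ 2 := by
        rw [← Real.inv_one_add_tan_sq hcosc, one_div, inv_inv]
      rw [hinv]
    have htc : C ≤ Real.tan c := by
      have h11 : Real.tan z₁ < Real.tan c := hmono z₁ c h₁ hcI hc.1
      rw [ht₁] at h11
      have hF1 : C ≤ F z₁ := hFC z₁ h₁.1.le
      linarith
    have hderivF : deriv F c ≤ M := hM c (hIooPos c hcI)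
    have htc2 : C ^ 2 ≤ Real.tan c ^ 2 := pow_le_pow_left₀ hC0 htc 2
    rw [hdG] at hc0
    linarith
  refine ⟨z, ⟨hzmem, hzsol⟩, ?_⟩
  rintro y ⟨hy, hty⟩
  rcases lt_trichotomy y z with h | h | h
  · exact absurd (key y z hy hzmem hty hzsol h) not_false
  · exact h
  · exact absurd (key z y hzmem hy hzsol hty h) not_false
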